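/- For the affine group G of the line, the reconstruction equations θ̇₁ = w₁(t) + qẋ(t), e^{−θ₁}φ̇₁ = −φ₀w₁(t) + e^{θ_m(t)}w₂(t) − qφ₀ẋ(t), with θ_m(t) = −qx(t) + qx₀ + θ₀, the solutions x, w₁, w₂ of the reduced equations as above, and initial conditions θ₁(0) = 0, φ₁(0) = 0, have the unique solution θ₁(t) = −½t² + (qẋ₀ + θ̇₀)t and φ₁(t) = φ̇₀ t + φ₀(1 − exp(½(2qẋ₀ − t + 2θ̇₀)t)); moreover composing via the group law gives θ(t) = θ₁(t) + θ_m(t) = ½t²/(q²−1) + θ̇₀t + θ₀ and φ(t) = e^{θ₁(t)}φ₀ + φ₁(t) = φ̇₀t + φ₀, recovering the full Euler-Lagrange solution. -/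

import Mathlib

/-- Reconstruction for the affine group: the reconstruction equations
`θ̇₁ = w₁ + qẋ`, `e^{−θ₁}φ̇₁ = −φ₀w₁ + e^{θ_m}w₂ − qφ₀ẋ` (with the horizontal-lift
data `θ_m(t) = −qx(t) + qx₀ + θ₀` and the reduced solutions `x, w₁, w₂`) have,
with `θ₁(0) = 0`, `φ₁(0) = 0`, the unique solution
`θ₁(t) = −½t² + (qẋ₀ + θ̇₀)t`,
`φ₁(t) = φ̇₀t + φ₀(1 − exp(½(2qẋ₀ − t + 2θ̇₀)t))`;
composing via the group law recovers the Euler-Lagrange solution: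
`θ₁ + θ_m = ½t²/(q²−1) + θ̇₀t + θ₀` and `e^{θ₁}φ₀ + φ₁ = φ̇₀t + φ₀`. -/
theorem affine_reconstruction
    (q x₀ xd₀ θ₀ θd₀ φ₀ φd₀ : ℝ) (hq : q^2 ≠ 1) (hφd₀ : 0 < φd₀)
    (θ₁ φ₁ : ℝ → ℝ)
    (hθ₁ : Differentiable ℝ θ₁) (hφ₁ : Differentiable ℝ φ₁) :
    let x : ℝ → ℝ := fun t => -(1/2) * (q * t^2 / (q^2 - 1)) + xd₀ * t + x₀
    let w₁ : ℝ → ℝ := fun t => t / (q^2 - 1) + θd₀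
    let w₂ : ℝ → ℝ := fun t => φd₀ * Real.exp (-θ₀
      - ((1/2) * t^2 - θd₀ * t + θd₀ * q^2 * t) / (q^2 - 1))
    let θm : ℝ → ℝ := fun t => -(q * x t) + q * x₀ + θ₀
    (∀ t, deriv θ₁ t = w₁ t + q * deriv x t) →
    (∀ t, Real.exp (-(θ₁ t)) * deriv φ₁ t
      = -(φ₀ * w₁ t) + Real.exp (θm t) * w₂ t - q * φ₀ * deriv x t) →
    θ₁ 0 = 0 → φ₁ 0 = 0 →
    ∀ t : ℝ,
      θ₁ t = -(1/2) * t^2 + (q * xd₀ + θd₀) * t ∧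
      φ₁ t = φd₀ * t + φ₀ * (1 - Real.exp ((1/2) * (2*q*xd₀ - t + 2*θd₀) * t)) ∧
      θ₁ t + θm t = (1/2) * (t^2 / (q^2 - 1)) + θd₀ * t + θ₀ ∧
      Real.exp (θ₁ t) * φ₀ + φ₁ t = φd₀ * t + φ₀ := by
  intro x w₁ w₂ θm hrec1 hrec2 hθ0 hφ0 t
  have hq' : q^2 - 1 ≠ 0 := sub_ne_zero.mpr hq
  -- derivative of x
  have hx : ∀ s : ℝ, HasDerivAt x (-(q*s/(q^2-1)) + xd₀) s := by
    intro s
    have heq : x = fun u : ℝ => (-(1/2)*q/(q^2-1))*u^2 + xd₀*u + x₀ := by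
      funext u; show -(1/2) * (q * u^2 / (q^2 - 1)) + xd₀ * u + x₀ = _; ring
    rw [heq]
    have h2 : HasDerivAt (fun u : ℝ => u^2) (2*s) s := by
      simpa using hasDerivAt_pow 2 s
    have := ((h2.const_mul (-(1/2)*q/(q^2-1))).add
      ((hasDerivAt_id s).const_mul xd₀)).add_const x₀
    refine this.congr_deriv ?_
    field_simp
  -- derivative of θ₁ simplified
  have hθd : ∀ s : ℝ, deriv θ₁ s = -s + (q*xd₀ + θd₀) := by
    intro s
    rw [hrec1 s, (hx s).deriv]
    show s / (q^2-1) + θd₀ + q * (-(q*s/(q^2-1)) + xd₀) = _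
    field_simp; ring
  -- the polynomial P
  set P : ℝ → ℝ := fun s => -(1/2) * s^2 + (q * xd₀ + θd₀) * s with hP
  have hPd : ∀ s : ℝ, HasDerivAt P (-s + (q*xd₀ + θd₀)) s := by
    intro s
    have h2 : HasDerivAt (fun u : ℝ => u^2) (2*s) s := by
      simpa using hasDerivAt_pow 2 s
    have := (h2.const_mul (-(1/2))).add ((hasDerivAt_id s).const_mul (q*xd₀+θd₀))
    refine this.congr_deriv ?_; ring
  have hθeq : ∀ s : ℝ, θ₁ s = P s := by
    have hdiff : Differentiable ℝ (fun s => θ₁ s - P s) :=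
      hθ₁.sub (fun s => (hPd s).differentiableAt)
    have hzero : ∀ s, deriv (fun s => θ₁ s - P s) s = 0 := by
      intro s
      rw [deriv_fun_sub (hθ₁ s) (hPd s).differentiableAt, hθd s, (hPd s).deriv]
      ring
    intro s
    have := is_const_of_deriv_eq_zero hdiff hzero s 0
    have hP0 : P 0 = 0 := by simp [hP]
    rw [hθ0, hP0, sub_zero] at this
    linarith [this]
  -- derivative of φ₁ simplified
  have hφd : ∀ s : ℝ, deriv φ₁ s = φd₀ + φ₀ * (s - (q*xd₀+θd₀)) * Real.exp (P s) := by
    intro s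
    have h1 : deriv φ₁ s = Real.exp (θ₁ s) * (Real.exp (-(θ₁ s)) * deriv φ₁ s) := by
      rw [← mul_assoc, ← Real.exp_add]
      simp
    rw [h1, hrec2 s, (hx s).deriv, hθeq s]
    show Real.exp (P s) * (-(φ₀ * (s / (q^2-1) + θd₀))
        + Real.exp (-(q * (-(1/2) * (q * s^2 / (q^2 - 1)) + xd₀ * s + x₀)) + q*x₀ + θ₀)
          * (φd₀ * Real.exp (-θ₀ - ((1/2) * s^2 - θd₀ * s + θd₀ * q^2 * s) / (q^2 - 1)))
        - q * φ₀ * (-(q*s/(q^2-1)) + xd₀)) = _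
    have hsum : P s + ((-(q * (-(1/2) * (q * s^2 / (q^2 - 1)) + xd₀ * s + x₀)) + q*x₀ + θ₀)
        + (-θ₀ - ((1/2) * s^2 - θd₀ * s + θd₀ * q^2 * s) / (q^2 - 1))) = 0 := by
      simp only [hP]; field_simp; ring
    have hexp : Real.exp (P s) * (Real.exp (-(q * (-(1/2) * (q * s^2 / (q^2 - 1)) + xd₀ * s + x₀)) + q*x₀ + θ₀)
        * Real.exp (-θ₀ - ((1/2) * s^2 - θd₀ * s + θd₀ * q^2 * s) / (q^2 - 1))) = 1 := by
      rw [← Real.exp_add, ← Real.exp_add, hsum, Real.exp_zero]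
    have hlin : -(φ₀ * (s / (q^2-1) + θd₀)) - q * φ₀ * (-(q*s/(q^2-1)) + xd₀)
        = φ₀ * (s - (q*xd₀+θd₀)) := by field_simp; ring
    calc Real.exp (P s) * (-(φ₀ * (s / (q^2-1) + θd₀))
        + Real.exp (-(q * (-(1/2) * (q * s^2 / (q^2 - 1)) + xd₀ * s + x₀)) + q*x₀ + θ₀)
          * (φd₀ * Real.exp (-θ₀ - ((1/2) * s^2 - θd₀ * s + θd₀ * q^2 * s) / (q^2 - 1)))
        - q * φ₀ * (-(q*s/(q^2-1)) + xd₀))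
        = φd₀ * (Real.exp (P s) * (Real.exp (-(q * (-(1/2) * (q * s^2 / (q^2 - 1)) + xd₀ * s + x₀)) + q*x₀ + θ₀)
            * Real.exp (-θ₀ - ((1/2) * s^2 - θd₀ * s + θd₀ * q^2 * s) / (q^2 - 1))))
          + Real.exp (P s) * (-(φ₀ * (s / (q^2-1) + θd₀)) - q * φ₀ * (-(q*s/(q^2-1)) + xd₀)) := by
          ring
      _ = φd₀ + φ₀ * (s - (q*xd₀+θd₀)) * Real.exp (P s) := by
          rw [hexp, hlin]; ring
  -- the function Q for φ₁
  set Q : ℝ → ℝ := fun s => φd₀ * s + φ₀ * (1 - Real.exp (P s)) with hQ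
  have hQd : ∀ s : ℝ, HasDerivAt Q (φd₀ + φ₀ * (s - (q*xd₀+θd₀)) * Real.exp (P s)) s := by
    intro s
    have he : HasDerivAt (fun u => Real.exp (P u)) (Real.exp (P s) * (-s + (q*xd₀+θd₀))) s :=
      (hPd s).exp
    have := ((hasDerivAt_id s).const_mul φd₀).add
      (((hasDerivAt_const s (1:ℝ)).sub he).const_mul φ₀)
    refine this.congr_deriv ?_; ring
  have hφeq : ∀ s : ℝ, φ₁ s = Q s := by
    have hdiff : Differentiable ℝ (fun s => φ₁ s - Q s) :=
      hφ₁.sub (fun s => (hQd s).differentiableAt)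
    have hzero : ∀ s, deriv (fun s => φ₁ s - Q s) s = 0 := by
      intro s
      rw [deriv_fun_sub (hφ₁ s) (hQd s).differentiableAt, hφd s, (hQd s).deriv]
      ring
    intro s
    have := is_const_of_deriv_eq_zero hdiff hzero s 0
    have hQ0 : Q 0 = 0 := by simp [hQ, hP]
    rw [hφ0, hQ0] at this
    have h0 : φ₁ s - Q s = 0 := by simpa using this
    linarith [h0]
  have hPexp : P t = (1/2) * (2*q*xd₀ - t + 2*θd₀) * t := by simp only [hP]; ring
  refine ⟨hθeq t, ?_, ?_, ?_⟩
  · rw [hφeq t]; simp only [hQ, hPexp]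
  · rw [hθeq t]
    show P t + (-(q * (-(1/2) * (q * t^2 / (q^2 - 1)) + xd₀ * t + x₀)) + q*x₀ + θ₀) = _
    simp only [hP]; field_simp; ring
  · rw [hθeq t, hφeq t]; simp only [hQ]; ring
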